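/- arXiv:2006.10247 — 4 statements merged into one kernel-verified Lean document; each statement's English description precedes it below -/
import Mathlib

section
/- Let (I_1,…,I_n) be a Grassmannlike necklace of type (k,n) with removal permutation ρ and insertion permutation ι. Then I_1 = {a ∈ {1,…,n} : ρ⁻¹(a) ≤ ι⁻¹(a)}. Consequently, two Grassmannlike necklaces of type (k,n) with the same removal permutation and the same insertion permutation are equal. -/
open Finset

/-- `f` is an affine permutation of period `n`: an `n`-periodic bijection of `ℤ`. -/
def IsAffinePerm (n : ℕ) (f : Equiv.Perm ℤ) : Prop :=
  ∀ a : ℤ, f (a + n) = f a + n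

/-- The length of an affine permutation of period `n`:
the number of pairs `(i, j)` with `i ∈ {1,…,n}`, `j ∈ ℤ`, `i < j` and `f i > f j`. -/
noncomputable def aLen (n : ℕ) (f : Equiv.Perm ℤ) : ℕ :=
  Set.ncard {p : ℤ × ℤ | 1 ≤ p.1 ∧ p.1 ≤ (n : ℤ) ∧ p.1 < p.2 ∧ f p.2 < f p.1}

/-- `t` is the affine transposition `t_{a,b}` (period `n`): it swaps `a + jn` and `b + jn`
for all `j : ℤ` and fixes everything else; requires `a ≢ b (mod n)`. -/
def IsAffTranspAt (n : ℕ) (a b : ℤ) (t : Equiv.Perm ℤ) : Prop :=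
  ¬ ((n : ℤ) ∣ b - a) ∧
    ∀ x : ℤ,
      ((n : ℤ) ∣ x - a → t x = x - a + b) ∧
      ((n : ℤ) ∣ x - b → t x = x - b + a) ∧
      (¬ (n : ℤ) ∣ x - a → ¬ (n : ℤ) ∣ x - b → t x = x)

/-- `t` is an affine transposition of period `n`. -/
def IsAffTransp (n : ℕ) (t : Equiv.Perm ℤ) : Prop :=
  ∃ a b : ℤ, IsAffTranspAt n a b t

/-- The right associated reflections `T_R(f)`: affine transpositions `t` with `ℓ(f t) < ℓ(f)`. -/
def TR (n : ℕ) (f : Equiv.Perm ℤ) : Set (Equiv.Perm ℤ) :=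
  {t | IsAffTransp n t ∧ aLen n (f * t) < aLen n f}

/-- The left associated reflections `T_L(f)`: affine transpositions `t` with `ℓ(t f) < ℓ(f)`. -/
def TL (n : ℕ) (f : Equiv.Perm ℤ) : Set (Equiv.Perm ℤ) :=
  {t | IsAffTransp n t ∧ aLen n (t * f) < aLen n f}

/-- `u ≤_R f`: the factorization `f = u · (u⁻¹ f)` is length-additive. -/
def LeR (n : ℕ) (u f : Equiv.Perm ℤ) : Prop :=
  aLen n f = aLen n u + aLen n (u⁻¹ * f)

/-- `Bound k n`: bounded affine permutations, `a < f a ≤ a + n` with average shift `k`. -/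
def Bound (k n : ℕ) : Set (Equiv.Perm ℤ) :=
  {f | IsAffinePerm n f ∧ (∀ a : ℤ, a < f a ∧ f a ≤ a + n) ∧
    (∑ a ∈ Finset.Icc (1 : ℤ) (n : ℤ), (f a - a)) = (k : ℤ) * n}

/-- A permutation of `{1,…,n}` (modelled on `Fin n`) has type `(k,n)`:
`#{a : a ≤ π⁻¹ a} = k`. -/
def IsType (k n : ℕ) (π : Equiv.Perm (Fin n)) : Prop :=
  (Finset.univ.filter (fun a : Fin n => a ≤ π⁻¹ a)).card = k

/-- `f` is the lift of `π` : the affine permutation with `f a = π a` if `π a > a`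
and `f a = π a + n` otherwise (identifying `v : Fin n` with the integer `v + 1 ∈ {1,…,n}`). -/
def IsLift (n : ℕ) (π : Equiv.Perm (Fin n)) (f : Equiv.Perm ℤ) : Prop :=
  IsAffinePerm n f ∧ ∀ a : Fin n,
    f ((a.val : ℤ) + 1) =
      if (a.val : ℤ) < ((π a).val : ℤ) then ((π a).val : ℤ) + 1
      else ((π a).val : ℤ) + 1 + n

/-- The position of `a` in the cyclic (linear) order `<_i` on `Fin n` starting at `i`. -/
def cPos (n : ℕ) [NeZero n] (i a : Fin n) : ℕ := (a - i).val

/-- `a, b, c, d` is a cyclically ordered quadruple. -/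
def CyclicOrdered (n : ℕ) [NeZero n] (a b c d : Fin n) : Prop :=
  0 < cPos n a b ∧ cPos n a b < cPos n a c ∧ cPos n a c < cPos n a d

/-- Two subsets `I, J` of `Fin n` are weakly separated. -/
def WeaklySeparated (n : ℕ) [NeZero n] (I J : Finset (Fin n)) : Prop :=
  ¬ ∃ a b c d : Fin n, CyclicOrdered n a b c d ∧
      a ∈ I ∧ a ∉ J ∧ c ∈ I ∧ c ∉ J ∧ b ∈ J ∧ b ∉ I ∧ d ∈ J ∧ d ∉ I

/-- `(I_1,…,I_n)` (indexed by `Fin n`, cyclically) is a Grassmannlike necklace of type `(k,n)`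
with removal permutation `ρ` and insertion permutation `ι`. -/
def IsGrassNecklace (n k : ℕ) [NeZero n] (I : Fin n → Finset (Fin n))
    (ρ ι : Equiv.Perm (Fin n)) : Prop :=
  (∀ a : Fin n, (I a).card = k) ∧
    ∀ a : Fin n, ρ a ∈ I a ∧ I (a + 1) = insert (ι a) ((I a).erase (ρ a))

/-- Auxiliary construction of the Grassmannlike necklace with removal `ρ` and insertion `ι`. -/
def neckAux (n : ℕ) [NeZero n] (ρ ι : Equiv.Perm (Fin n)) : ℕ → Finset (Fin n)
  | 0 => Finset.univ.filter (fun a : Fin n => ρ⁻¹ a ≤ ι⁻¹ a)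
  | m + 1 => insert (ι (Fin.ofNat n m)) ((neckAux n ρ ι m).erase (ρ (Fin.ofNat n m)))

/-- The Grassmannlike necklace with removal permutation `ρ` and insertion permutation `ι`:
its first term is `{a : ρ⁻¹ a ≤ ι⁻¹ a}` and `I_{a+1} = (I_a ∖ {ρ a}) ∪ {ι a}`.
The forward Grassmann necklace of `π` is `necklace n 1 π`; the reverse Grassmann
necklace of `π` is `necklace n π⁻¹ 1`. -/
def necklace (n : ℕ) [NeZero n] (ρ ι : Equiv.Perm (Fin n)) (j : Fin n) : Finset (Fin n) :=
  neckAux n ρ ι j.val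

/-- The sorted list of positions (in the order `<_i`) of the elements of `S`. -/
def sortedShift (n : ℕ) [NeZero n] (i : Fin n) (S : Finset (Fin n)) : List ℕ :=
  (S.image (fun a => cPos n i a)).sort (· ≤ ·)

/-- `S ≤_i T` componentwise on `<_i`-sorted lists. -/
def leCyc (n : ℕ) [NeZero n] (i : Fin n) (S T : Finset (Fin n)) : Prop :=
  List.Forall₂ (· ≤ ·) (sortedShift n i S) (sortedShift n i T)

/-- The positroid `𝓜_π` of `π` (via Oh's theorem, taken as the definition). -/
def positroid (k n : ℕ) [NeZero n] (π : Equiv.Perm (Fin n)) : Set (Finset (Fin n)) :=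
  {S | S.card = k ∧ ∀ j : Fin n, leCyc n j (necklace n 1 π j) S}

/-- `v` lies strictly inside the arc from `w` clockwise to `x`. -/
def InArc (n : ℕ) [NeZero n] (w v x : Fin n) : Prop :=
  0 < cPos n w v ∧ cPos n w v < cPos n w x

/-- The chords `w ↦ x` and `y ↦ z` are noncrossing: they do not intersect,
including at boundary vertices. -/
def Noncrossing (n : ℕ) [NeZero n] (w x y z : Fin n) : Prop :=
  w ≠ y ∧ w ≠ z ∧ x ≠ y ∧ x ≠ z ∧
    ¬ ((InArc n w y x ∧ InArc n x z w) ∨ (InArc n w z x ∧ InArc n x y w))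

/-- The (distinct) chords `w ↦ x` and `y ↦ z` are crossing. -/
def Crossing (n : ℕ) [NeZero n] (w x y z : Fin n) : Prop :=
  (w ≠ y ∨ x ≠ z) ∧ ¬ Noncrossing n w x y z

/-- The noncrossing chords `w ↦ x` and `y ↦ z` are aligned:
`w <_w y <_w z <_w x`, or `w <_w x <_w z <_w y`, or `w = x` and `w <_w y <_w z`. -/
def Aligned (n : ℕ) [NeZero n] (w x y z : Fin n) : Prop :=
  Noncrossing n w x y z ∧
    ((0 < cPos n w y ∧ cPos n w y < cPos n w z ∧ cPos n w z < cPos n w x) ∨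
     (0 < cPos n w x ∧ cPos n w x < cPos n w z ∧ cPos n w z < cPos n w y) ∨
     (w = x ∧ 0 < cPos n w y ∧ cPos n w y < cPos n w z))

/-- A noncrossing toggle relating two Grassmannlike necklaces, each encoded by its pair
(removal permutation, insertion permutation): at some position `p`, the toggle is defined
(`ρ(p-1) ≠ ι(p)` and `ρ(p) ≠ ι(p-1)`), the chords `ρ(p-1) ↦ ι(p-1)` and `ρ(p) ↦ ι(p)`
are noncrossing, and the new permutations are obtained by right multiplication by the
transposition of positions `p-1, p`. -/
def NoncrossingToggle (n : ℕ) [NeZero n]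
    (N N' : Equiv.Perm (Fin n) × Equiv.Perm (Fin n)) : Prop :=
  ∃ p : Fin n,
    N.1 (p - 1) ≠ N.2 p ∧ N.1 p ≠ N.2 (p - 1) ∧
    Noncrossing n (N.1 (p - 1)) (N.2 (p - 1)) (N.1 p) (N.2 p) ∧
    N'.1 = N.1 * Equiv.swap (p - 1) p ∧ N'.2 = N.2 * Equiv.swap (p - 1) p

/-- The Plücker coordinate `Δ_I(M)`: the determinant of the `k × k` submatrix of `M`
on the columns indexed by `I` (in increasing order); junk value `0` if `I.card ≠ k`. -/
noncomputable def plucker (k n : ℕ) (M : Matrix (Fin k) (Fin n) ℂ) (I : Finset (Fin n)) : ℂ :=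
  if h : I.card = k then
    Matrix.det (Matrix.of (fun r c : Fin k => M r ((I.orderIsoOfFin h) c).1))
  else 0

/-- The matrix cone `Π°_π` over the open positroid variety of `π`: full-rank `k × n`
matrices with `Δ_J = 0` for `J ∉ 𝓜_π` and nonvanishing forward-necklace Plücker coordinates. -/
def openPos (k n : ℕ) [NeZero n] (π : Equiv.Perm (Fin n)) : Set (Matrix (Fin k) (Fin n) ℂ) :=
  {M | M.rank = k ∧
    (∀ J : Finset (Fin n), J.card = k → J ∉ positroid k n π → plucker k n M J = 0) ∧
    (∀ j : Fin n, plucker k n M (necklace n 1 π j) ≠ 0)}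

/-- `N` is the right twist of `M` along the necklace `I` with removal permutation `ρ`:
for all `a` and all `b ∈ I a`, `⟨N_a, M_b⟩ = δ_{b, ρ a}`. -/
def IsRightTwist (k n : ℕ) (I : Fin n → Finset (Fin n)) (ρ : Equiv.Perm (Fin n))
    (M N : Matrix (Fin k) (Fin n) ℂ) : Prop :=
  ∀ a : Fin n, ∀ b ∈ I a, (∑ j : Fin k, N j a * M j b) = if b = ρ a then 1 else 0

/-- `N` is the left twist of `M` along the necklace `I` with insertion permutation `ι`:
for all `a` and all `b ∈ I (a+1)`, `⟨N_a, M_b⟩ = δ_{b, ι a}`. -/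
def IsLeftTwist (k n : ℕ) [NeZero n] (I : Fin n → Finset (Fin n)) (ι : Equiv.Perm (Fin n))
    (M N : Matrix (Fin k) (Fin n) ℂ) : Prop :=
  ∀ a : Fin n, ∀ b ∈ I (a + 1), (∑ j : Fin k, N j a * M j b) = if b = ι a then 1 else 0

open Fin.NatCast
open Fin.CommRing

/-- Auxiliary: the value of a difference in `Fin n`. -/
lemma finSubVal (n : ℕ) [NeZero n] (a b : Fin n) :
    (a - b).val = (n - b.val + a.val) % n := by
  rw [Fin.sub_def]

/-- Membership in the first term of a Grassmannlike necklace. -/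
lemma grassNecklace_mem_zero (n k : ℕ) [NeZero n] (I : Fin n → Finset (Fin n))
    (ρ ι : Equiv.Perm (Fin n)) (hI : IsGrassNecklace n k I ρ ι) (x : Fin n) :
    x ∈ I 0 ↔ ρ⁻¹ x ≤ ι⁻¹ x := by
  have hstep : ∀ a : Fin n, ∀ y : Fin n,
      y ∈ I (a + 1) ↔ y = ι a ∨ (y ≠ ρ a ∧ y ∈ I a) := by
    intro a y
    rw [(hI.2 a).2, Finset.mem_insert, Finset.mem_erase]
  set m : Fin n := ρ⁻¹ x with hm
  set p : Fin n := ι⁻¹ x with hp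
  set q : Fin n := p + 1 with hq
  set d : ℕ := (m - q).val with hd
  have key : ∀ t : ℕ, t < n → (x ∈ I (q + (t : Fin n)) ↔ t ≤ d) := by
    intro t
    induction t with
    | zero =>
      intro _
      simp only [Nat.cast_zero, add_zero]
      constructor
      · intro _; exact Nat.zero_le _
      · intro _
        rw [hq, hstep]
        left
        rw [hp]
        exact (Equiv.apply_symm_apply ι x).symm
    | succ t ih =>
      intro h
      have ht : t < n := Nat.lt_of_succ_lt h
      have hcast : ((t + 1 : ℕ) : Fin n) = (t : Fin n) + 1 := by push_cast; ring
      rw [hcast, ← add_assoc, hstep]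
      have h1 : x ≠ ι (q + (t : Fin n)) := by
        intro hx
        have hpe : p = q + (t : Fin n) := by
          rw [hp, hx, Equiv.Perm.inv_def, Equiv.symm_apply_apply]
        have h0 : (1 : Fin n) + (t : Fin n) = 0 := by
          have h' : p + ((1 : Fin n) + (t : Fin n)) = p + 0 := by
            rw [add_zero, ← add_assoc, ← hq, ← hpe]
          exact add_left_cancel h'
        have h0' : ((1 + t : ℕ) : Fin n) = 0 := by push_cast; exact h0
        have hv := congrArg Fin.val h0'
        rw [Fin.val_cast_of_lt (by omega : 1 + t < n), Fin.val_zero] at hv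
        omega
      have h2 : x = ρ (q + (t : Fin n)) ↔ t = d := by
        constructor
        · intro hx
          have hme : m = q + (t : Fin n) := by
            rw [hm, hx, Equiv.Perm.inv_def, Equiv.symm_apply_apply]
          have h3 : m - q = (t : Fin n) := by rw [hme]; ring
          rw [hd, h3, Fin.val_cast_of_lt ht]
        · intro htd
          have h3 : (t : Fin n) = m - q := by
            rw [htd, hd, Fin.cast_val_eq_self]
          have hme : q + (t : Fin n) = m := by rw [h3]; ring
          rw [hme, hm, Equiv.Perm.inv_def, Equiv.apply_symm_apply]
      constructor
      · rintro (hx | ⟨hne, hmem⟩)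
        · exact absurd hx h1
        · have hld := (ih ht).mp hmem
          have hnd : t ≠ d := fun hdd => hne (h2.mpr hdd)
          omega
      · intro hle
        right
        exact ⟨fun hx => by have := h2.mp hx; omega, (ih ht).mpr (by omega)⟩
  have h0 : x ∈ I 0 ↔ (0 - q : Fin n).val ≤ d := by
    have hk := key (0 - q : Fin n).val (Fin.is_lt _)
    rw [Fin.cast_val_eq_self] at hk
    have hq0 : q + (0 - q) = (0 : Fin n) := by ring
    rw [hq0] at hk
    exact hk
  rw [h0, Fin.le_def]
  obtain ⟨N, rfl⟩ : ∃ N, n = N + 1 := ⟨n - 1, by have := NeZero.pos n; omega⟩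
  have hqv : q.val = if p = Fin.last N then 0 else p.val + 1 := Fin.val_add_one p
  have hpv : p.val < N + 1 := p.is_lt
  have hmv : m.val < N + 1 := m.is_lt
  have hlast : p = Fin.last N ↔ p.val = N := by
    constructor
    · intro h; rw [h]; rfl
    · intro h; exact Fin.ext h
  rw [hd, finSubVal, finSubVal]
  simp only [Fin.val_zero]
  by_cases hpl : p = Fin.last N
  · have hq0 : q.val = 0 := by rw [hqv, if_pos hpl]
    have hpN : p.val = N := hlast.mp hpl
    rw [hq0]
    simp only [Nat.sub_zero, Nat.add_zero, Nat.mod_self]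
    constructor
    · intro _; omega
    · intro _; exact Nat.zero_le _
  · have hqv' : q.val = p.val + 1 := by rw [hqv, if_neg hpl]
    have hpN : p.val ≠ N := fun h => hpl (hlast.mpr h)
    rw [hqv']
    have e1 : (N + 1 - (p.val + 1) + 0) % (N + 1) = N - p.val := by
      rw [Nat.add_zero, Nat.mod_eq_of_lt (by omega)]
      omega
    rw [e1]
    by_cases hmp : m.val ≤ p.val
    · have e2 : (N + 1 - (p.val + 1) + m.val) % (N + 1) = N - p.val + m.val := by
        rw [Nat.mod_eq_of_lt (by omega)]
        omega
      rw [e2]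
      constructor
      · intro _; exact hmp
      · intro _; omega
    · have e2 : (N + 1 - (p.val + 1) + m.val) % (N + 1) = m.val - p.val - 1 := by
        have h3 : N + 1 - (p.val + 1) + m.val = (N + 1) + (m.val - p.val - 1) := by omega
        rw [h3, Nat.add_mod_left, Nat.mod_eq_of_lt (by omega)]
      rw [e2]
      constructor
      · intro hc; omega
      · intro hc; omega

/-- A Grassmannlike necklace is determined by its removal and insertion
permutations; its first term is `{a : ρ⁻¹ a ≤ ι⁻¹ a}`. -/
theorem grassNecklace_first_term_and_unique
    (n k : ℕ) [NeZero n] (I : Fin n → Finset (Fin n)) (ρ ι : Equiv.Perm (Fin n))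
    (hI : IsGrassNecklace n k I ρ ι) :
    I 0 = Finset.univ.filter (fun a : Fin n => ρ⁻¹ a ≤ ι⁻¹ a) ∧
    ∀ J : Fin n → Finset (Fin n), IsGrassNecklace n k J ρ ι → J = I := by
  have h0 : ∀ (K : Fin n → Finset (Fin n)), IsGrassNecklace n k K ρ ι →
      K 0 = Finset.univ.filter (fun a : Fin n => ρ⁻¹ a ≤ ι⁻¹ a) := by
    intro K hK
    ext x
    simp only [Finset.mem_filter, Finset.mem_univ, true_and]
    exact grassNecklace_mem_zero n k K ρ ι hK x
  refine ⟨h0 I hI, ?_⟩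
  intro J hJ
  have key : ∀ t : ℕ, J (t : Fin n) = I (t : Fin n) := by
    intro t
    induction t with
    | zero =>
      simp only [Nat.cast_zero]
      rw [h0 I hI, h0 J hJ]
    | succ t ih =>
      have hcast : ((t + 1 : ℕ) : Fin n) = (t : Fin n) + 1 := by push_cast; ring
      rw [hcast, (hJ.2 _).2, (hI.2 _).2, ih]
  funext a
  have := key a.val
  rwa [Fin.cast_val_eq_self] at this
end

section
/- Let 𝓘 = (I_1,…,I_n) be a Grassmannlike necklace of type (k,n) with removal permutation ρ, insertion permutation ι, and underlying permutation μ = ρ⁻¹∘ι. Then μ has type (k,n), and for every index j one has I_j = ρ(vecI_j) and I_j = ι(cevI_j) (images taken elementwise), where (vecI_1,…,vecI_n) is the forward Grassmann necklace of μ and (cevI_1,…,cevI_n) is the reverse Grassmann necklace of μ. -/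
open Finset

open Fin.NatCast in
lemma myMem_I_zero (n k : ℕ) [NeZero n] (I : Fin n → Finset (Fin n)) (ρ ι : Equiv.Perm (Fin n))
    (hI : IsGrassNecklace n k I ρ ι) (b : Fin n) :
    b ∈ I 0 ↔ (ρ⁻¹ b).val ≤ (ι⁻¹ b).val := by
  have hrec : ∀ m : ℕ, m < n → (b ∈ I ((m + 1 : ℕ) : Fin n) ↔
      ((ι⁻¹ b).val = m ∨ (b ∈ I ((m : ℕ) : Fin n) ∧ (ρ⁻¹ b).val ≠ m))) := by
    intro m hm
    have h1 : ((m + 1 : ℕ) : Fin n) = ((m : ℕ) : Fin n) + 1 := by push_cast; ring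
    rw [h1, (hI.2 ((m : ℕ) : Fin n)).2, Finset.mem_insert, Finset.mem_erase]
    have hvm : (((m : ℕ) : Fin n)).val = m := Fin.val_cast_of_lt hm
    have e1 : (b = ι ((m : ℕ) : Fin n)) ↔ (ι⁻¹ b).val = m := by
      constructor
      · intro h; rw [h]; simp [hvm]
      · intro h
        have h2 : ι⁻¹ b = ((m : ℕ) : Fin n) := Fin.ext (by rw [hvm, h])
        rw [← h2]; simp
    have e2 : (b = ρ ((m : ℕ) : Fin n)) ↔ (ρ⁻¹ b).val = m := by
      constructor
      · intro h; rw [h]; simp [hvm]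
      · intro h
        have h2 : ρ⁻¹ b = ((m : ℕ) : Fin n) := Fin.ext (by rw [hvm, h])
        rw [← h2]; simp
    rw [e1]
    constructor
    · rintro (h | ⟨h1', h2⟩)
      · exact Or.inl h
      · exact Or.inr ⟨h2, fun hc => h1' (e2.mpr hc)⟩
    · rintro (h | ⟨h1', h2⟩)
      · exact Or.inl h
      · exact Or.inr ⟨fun hc => h2 (e2.mp hc), h1'⟩
  have hmem_r : b ∈ I (((ρ⁻¹ b).val : ℕ) : Fin n) := by
    have h0 : (((ρ⁻¹ b).val : ℕ) : Fin n) = ρ⁻¹ b := Fin.cast_val_eq_self _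
    rw [h0]
    have h1 := (hI.2 (ρ⁻¹ b)).1
    simpa using h1
  have hrn : (ρ⁻¹ b).val < n := (ρ⁻¹ b).isLt
  have hin : (ι⁻¹ b).val < n := (ι⁻¹ b).isLt
  constructor
  · intro h0
    by_contra hlt
    push_neg at hlt
    -- hlt : (ι⁻¹ b).val < (ρ⁻¹ b).val
    have hstart : b ∉ I (((ρ⁻¹ b).val + 1 : ℕ) : Fin n) := by
      rw [hrec (ρ⁻¹ b).val hrn]
      rintro (h | ⟨_, h⟩)
      · omega
      · exact h rfl
    have up : ∀ m : ℕ, (ρ⁻¹ b).val + 1 ≤ m → m ≤ n → b ∉ I ((m : ℕ) : Fin n) := by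
      intro m hm
      induction m with
      | zero => omega
      | succ m ih =>
        intro hmn
        rcases Nat.lt_or_ge ((ρ⁻¹ b).val + 1) (m + 1) with hc | hc
        · have hm' : (ρ⁻¹ b).val + 1 ≤ m := by omega
          have hmn' : m < n := by omega
          rw [hrec m hmn']
          rintro (h | ⟨h, _⟩)
          · omega
          · exact ih hm' (by omega) h
        · have : m + 1 = (ρ⁻¹ b).val + 1 := by omega
          rw [this]; exact hstart
    have hend := up n (by omega) le_rfl
    have hn0 : ((n : ℕ) : Fin n) = (0 : Fin n) := by
      simp
    rw [hn0] at hend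
    exact hend h0
  · intro hle
    -- downward induction from (ρ⁻¹ b).val to 0
    have down : ∀ d : ℕ, d ≤ (ρ⁻¹ b).val → b ∈ I ((((ρ⁻¹ b).val - d : ℕ)) : Fin n) := by
      intro d
      induction d with
      | zero => intro _; simpa using hmem_r
      | succ d ih =>
        intro hd
        have hm' : ((ρ⁻¹ b).val - (d + 1)) + 1 = (ρ⁻¹ b).val - d := by omega
        have hlt : (ρ⁻¹ b).val - (d + 1) < n := by omega
        have hP := ih (by omega)
        rw [← hm'] at hP
        rw [hrec _ hlt] at hP
        rcases hP with h | ⟨h, _⟩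
        · omega
        · exact h
    have h0 := down (ρ⁻¹ b).val le_rfl
    simpa using h0

open Fin.NatCast in
lemma myGrass_eq_neckAux (n k : ℕ) [NeZero n] (I : Fin n → Finset (Fin n))
    (ρ ι : Equiv.Perm (Fin n)) (hI : IsGrassNecklace n k I ρ ι) :
    ∀ m : ℕ, I ((m : ℕ) : Fin n) = neckAux n ρ ι m := by
  intro m
  induction m with
  | zero =>
    ext b
    rw [show ((0 : ℕ) : Fin n) = (0 : Fin n) by simp,
      myMem_I_zero n k I ρ ι hI b, neckAux.eq_1, Finset.mem_filter]
    exact ⟨fun h => ⟨Finset.mem_univ b, h⟩, fun h => h.2⟩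
  | succ m ih =>
    have h1 : ((m + 1 : ℕ) : Fin n) = ((m : ℕ) : Fin n) + 1 := by push_cast; ring
    rw [h1, (hI.2 _).2, ih]
    rfl

lemma myNeckAux_forward (n : ℕ) [NeZero n] (ρ ι : Equiv.Perm (Fin n)) (m : ℕ) :
    neckAux n ρ ι m = (neckAux n 1 (ρ⁻¹ * ι) m).image ⇑ρ := by
  induction m with
  | zero =>
    rw [neckAux.eq_1, neckAux.eq_1]
    ext b
    simp only [Finset.mem_image, Finset.mem_filter, Finset.mem_univ, true_and]
    constructor
    · intro h
      refine ⟨ρ⁻¹ b, ?_, by simp⟩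
      simpa [Equiv.Perm.mul_apply] using h
    · rintro ⟨a, ha, rfl⟩
      simpa [Equiv.Perm.mul_apply] using ha
  | succ m ih =>
    rw [neckAux.eq_2, neckAux.eq_2, ih, Finset.image_insert,
      Finset.image_erase ρ.injective]
    simp [Equiv.Perm.mul_apply]

lemma myNeckAux_reverse (n : ℕ) [NeZero n] (ρ ι : Equiv.Perm (Fin n)) (m : ℕ) :
    neckAux n ρ ι m = (neckAux n (ρ⁻¹ * ι)⁻¹ 1 m).image ⇑ι := by
  induction m with
  | zero =>
    rw [neckAux.eq_1, neckAux.eq_1]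
    ext b
    simp only [Finset.mem_image, Finset.mem_filter, Finset.mem_univ, true_and]
    constructor
    · intro h
      refine ⟨ι⁻¹ b, ?_, by simp⟩
      simpa [Equiv.Perm.mul_apply] using h
    · rintro ⟨a, ha, rfl⟩
      simpa [Equiv.Perm.mul_apply] using ha
  | succ m ih =>
    rw [neckAux.eq_2, neckAux.eq_2, ih, Finset.image_insert,
      Finset.image_erase ι.injective]
    simp [Equiv.Perm.mul_apply]
/-- A Grassmannlike necklace with removal `ρ`, insertion `ι` and underlying
permutation `μ = ρ⁻¹ ∘ ι` satisfies `𝓘 = ρ(vec𝓘_μ) = ι(cev𝓘_μ)`, and `μ` has type `(k,n)`. -/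
theorem grassNecklace_eq_image_of_forward_and_reverse
    (n k : ℕ) [NeZero n] (I : Fin n → Finset (Fin n)) (ρ ι : Equiv.Perm (Fin n))
    (hI : IsGrassNecklace n k I ρ ι) :
    IsType k n (ρ⁻¹ * ι) ∧
    (∀ j : Fin n, I j = (necklace n 1 (ρ⁻¹ * ι) j).image (⇑ρ)) ∧
    (∀ j : Fin n, I j = (necklace n (ρ⁻¹ * ι)⁻¹ 1 j).image (⇑ι)) := by
  have key : ∀ j : Fin n, I j = neckAux n ρ ι j.val := by
    intro j
    have h := myGrass_eq_neckAux n k I ρ ι hI j.val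
    rwa [Fin.cast_val_eq_self] at h
  have fwd : ∀ j : Fin n, I j = (necklace n 1 (ρ⁻¹ * ι) j).image (⇑ρ) := by
    intro j
    rw [key j, myNeckAux_forward]
    rfl
  refine ⟨?_, fwd, ?_⟩
  · unfold IsType
    have h0 := fwd 0
    have hcard : (I 0).card = k := hI.1 0
    rw [h0, Finset.card_image_of_injective _ ρ.injective] at hcard
    rw [← hcard]
    congr 1
  · intro j
    rw [key j, myNeckAux_reverse]
    rfl
end

section
/- Let π and ι be permutations of {1,…,n} of type (k,n) with ι ≤_∘ π, and let f, i ∈ Bound(k,n) be their lifts. Then ℓ(i⁻¹·f·i) ≤ ℓ(f). -/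
open Finset

/-- The inversion set whose cardinality is `aLen`. -/
def invSet (n : ℕ) (f : Equiv.Perm ℤ) : Set (ℤ × ℤ) :=
  {p : ℤ × ℤ | 1 ≤ p.1 ∧ p.1 ≤ (n : ℤ) ∧ p.1 < p.2 ∧ f p.2 < f p.1}

lemma aLen_eq_ncard (n : ℕ) (f : Equiv.Perm ℤ) : aLen n f = (invSet n f).ncard := rfl

lemma affine_smul {n : ℕ} {g : Equiv.Perm ℤ} (hg : IsAffinePerm n g) (x m : ℤ) :
    g (x + m * n) = g x + m * n := by
  induction m using Int.induction_on with
  | zero => simp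
  | succ m ih =>
      have h1 : x + ((m : ℤ) + 1) * n = (x + m * n) + n := by ring
      rw [h1, hg, ih]; ring
  | pred m ih =>
      have h1 : (x + (-(m : ℤ) - 1) * n) + n = x + (-(m : ℤ)) * n := by ring
      have h2 := hg (x + (-(m : ℤ) - 1) * n)
      rw [h1, ih] at h2
      omega

lemma affine_inv {n : ℕ} {g : Equiv.Perm ℤ} (hg : IsAffinePerm n g) :
    IsAffinePerm n g⁻¹ := by
  intro a
  apply g.injective
  rw [Equiv.Perm.inv_def, Equiv.apply_symm_apply]
  have := hg (g⁻¹ a)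
  rw [Equiv.Perm.inv_def, Equiv.apply_symm_apply] at this
  exact this.symm

lemma affine_mul {n : ℕ} {u v : Equiv.Perm ℤ} (hu : IsAffinePerm n u)
    (hv : IsAffinePerm n v) : IsAffinePerm n (u * v) := by
  intro a
  simp only [Equiv.Perm.mul_apply, hv a, hu (v a)]

/-- Residue representative in `[1, n]`. -/
lemma residue_repr {n : ℕ} (hn : 0 < n) (x : ℤ) :
    ∃ q r : ℤ, 1 ≤ r ∧ r ≤ (n : ℤ) ∧ x = r + q * n := by
  refine ⟨(x - 1) / (n : ℤ), (x - 1) % (n : ℤ) + 1, ?_, ?_, ?_⟩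
  · have := Int.emod_nonneg (x - 1) (by exact_mod_cast hn.ne' : (n : ℤ) ≠ 0)
    omega
  · have := Int.emod_lt_of_pos (x - 1) (by exact_mod_cast hn : (0 : ℤ) < n)
    omega
  · have h2 := Int.mul_ediv_add_emod (x - 1) (n : ℤ)
    have h3 : (n : ℤ) * ((x - 1) / (n : ℤ)) = ((x - 1) / (n : ℤ)) * n := mul_comm _ _
    omega

lemma invSet_finite {n : ℕ} (hn : 0 < n) {g : Equiv.Perm ℤ} (hg : IsAffinePerm n g) :
    (invSet n g).Finite := by
  have hs : (Finset.Icc (1 : ℤ) (n : ℤ)).Nonempty := by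
    rw [Finset.nonempty_Icc]; exact_mod_cast hn
  set m : ℤ := (Finset.Icc (1 : ℤ) (n : ℤ)).inf' hs (fun a => g a - a) with hm
  set M : ℤ := (Finset.Icc (1 : ℤ) (n : ℤ)).sup' hs (fun a => g a) with hM
  have hlow : ∀ x : ℤ, m ≤ g x - x := by
    intro x
    obtain ⟨q, r, hr1, hr2, hx⟩ := residue_repr hn x
    have : g x = g r + q * n := by rw [hx, affine_smul hg]
    have hrm : m ≤ g r - r :=
      Finset.inf'_le (fun a => g a - a) (Finset.mem_Icc.mpr ⟨hr1, hr2⟩)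
    omega
  have hsub : invSet n g ⊆ Set.Icc (1 : ℤ) (n : ℤ) ×ˢ Set.Icc (1 : ℤ) (M - m) := by
    rintro ⟨a, b⟩ ⟨h1, h2, h3, h4⟩
    have hga : g a ≤ M := Finset.le_sup' (fun a => g a) (Finset.mem_Icc.mpr ⟨h1, h2⟩)
    have hb := hlow b
    have h4' : g b < g a := h4
    exact ⟨⟨h1, h2⟩, ⟨by omega, by omega⟩⟩
  exact Set.Finite.subset ((Set.finite_Icc _ _).prod (Set.finite_Icc _ _)) hsub

lemma aLen_mul_le {n : ℕ} (hn : 0 < n) {u v : Equiv.Perm ℤ}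
    (hu : IsAffinePerm n u) (hv : IsAffinePerm n v) :
    aLen n (u * v) ≤ aLen n u + aLen n v := by
  classical
  set A : Set (ℤ × ℤ) := invSet n (u * v) ∩ {p | v p.2 < v p.1} with hA
  set B : Set (ℤ × ℤ) := invSet n (u * v) ∩ {p | v p.1 < v p.2} with hB
  have hcover : invSet n (u * v) = A ∪ B := by
    ext ⟨a, b⟩
    constructor
    · intro h
      have hab : a ≠ b := ne_of_lt h.2.2.1
      have : v a ≠ v b := fun hc => hab (v.injective hc)
      rcases this.lt_or_gt with h' | h'
      · exact Or.inr ⟨h, h'⟩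
      · exact Or.inl ⟨h, h'⟩
    · rintro (⟨h, _⟩ | ⟨h, _⟩) <;> exact h
  have hAsub : A ⊆ invSet n v := by
    rintro ⟨a, b⟩ ⟨⟨h1, h2, h3, _⟩, h5⟩
    exact ⟨h1, h2, h3, h5⟩
  -- the map on the second part
  set ψ : ℤ × ℤ → ℤ × ℤ :=
    fun p => (v p.1 - ((v p.1 - 1) / (n : ℤ)) * n, v p.2 - ((v p.1 - 1) / (n : ℤ)) * n)
    with hψ
  have hfirst : ∀ x : ℤ, 1 ≤ x - ((x - 1) / (n : ℤ)) * n ∧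
      x - ((x - 1) / (n : ℤ)) * n ≤ (n : ℤ) := by
    intro x
    have h0 := Int.emod_nonneg (x - 1) (by exact_mod_cast hn.ne' : (n : ℤ) ≠ 0)
    have h1 := Int.emod_lt_of_pos (x - 1) (by exact_mod_cast hn : (0 : ℤ) < n)
    have h2 := Int.mul_ediv_add_emod (x - 1) (n : ℤ)
    have h3 : (n : ℤ) * ((x - 1) / (n : ℤ)) = ((x - 1) / (n : ℤ)) * n := mul_comm _ _
    omega
  have hψmem : ∀ p ∈ B, ψ p ∈ invSet n u := by
    rintro ⟨a, b⟩ ⟨⟨h1, h2, h3, h4⟩, h5⟩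
    have h4' : u (v b) < u (v a) := h4
    have h5' : v a < v b := h5
    set q : ℤ := (v a - 1) / (n : ℤ) with hq
    have hr := hfirst (v a)
    have e1 : u (v b - q * n) = u (v b) - q * n := by
      have h := affine_smul hu (v b) (-q)
      rw [neg_mul, ← sub_eq_add_neg, ← sub_eq_add_neg] at h
      exact h
    have e2 : u (v a - q * n) = u (v a) - q * n := by
      have h := affine_smul hu (v a) (-q)
      rw [neg_mul, ← sub_eq_add_neg, ← sub_eq_add_neg] at h
      exact h
    refine ⟨hr.1, hr.2, ?_, ?_⟩
    · show v a - q * n < v b - q * n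
      omega
    · show u (v b - q * n) < u (v a - q * n)
      rw [e1, e2]
      omega
  have hψinj : Set.InjOn ψ B := by
    rintro ⟨a, b⟩ ⟨⟨h1, h2, _, _⟩, _⟩ ⟨a', b'⟩ ⟨⟨h1', h2', _, _⟩, _⟩ heq
    set q : ℤ := (v a - 1) / (n : ℤ) with hq
    set q' : ℤ := (v a' - 1) / (n : ℤ) with hq'
    have e1 : v a - q * n = v a' - q' * n := congrArg Prod.fst heq
    have e2 : v b - q * n = v b' - q' * n := congrArg Prod.snd heq
    have hd : (q' - q) * (n : ℤ) = q' * n - q * n := by ring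
    have hva : v a' = v a + (q' - q) * n := by omega
    have hstep : v (a + (q' - q) * n) = v a + (q' - q) * n := affine_smul hv a _
    have haa : a' = a + (q' - q) * n := v.injective (by rw [hstep, ← hva])
    have hnpos : (0 : ℤ) < n := by exact_mod_cast hn
    have hqq : q = q' := by
      rcases lt_trichotomy q q' with h | h | h
      · exfalso
        have hge : (q' - q) * (n : ℤ) ≥ n := by nlinarith
        omega
      · exact h
      · exfalso
        have hle2 : (q' - q) * (n : ℤ) ≤ -(n : ℤ) := by nlinarith
        omega
    rw [← hqq] at e2
    have hz : (q' - q) * (n : ℤ) = 0 := by rw [← hqq]; ring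
    have haa' : a = a' := by omega
    have hbb : b = b' := v.injective (by omega)
    rw [haa', hbb]
  have hufin := invSet_finite hn hu
  have hvfin := invSet_finite hn hv
  have hB' : B.ncard ≤ (invSet n u).ncard := by
    rw [← Set.ncard_image_of_injOn hψinj]
    exact Set.ncard_le_ncard (Set.image_subset_iff.mpr hψmem) hufin
  have hA' : A.ncard ≤ (invSet n v).ncard := Set.ncard_le_ncard hAsub hvfin
  have hun := Set.ncard_union_le A B
  rw [aLen_eq_ncard, aLen_eq_ncard, aLen_eq_ncard, hcover]
  omega

/-- If `ι ≤_∘ π` with lifts `i, f ∈ Bound(k,n)`, then `ℓ(i⁻¹·f·i) ≤ ℓ(f)`. -/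
theorem conjugate_length_le
    (n k : ℕ) (π ι : Equiv.Perm (Fin n)) (f i : Equiv.Perm ℤ)
    (hπ : IsType k n π) (hι : IsType k n ι)
    (hf : IsLift n π f) (hfB : f ∈ Bound k n)
    (hi : IsLift n ι i) (hiB : i ∈ Bound k n)
    (hle : LeR n i f) :
    aLen n (i⁻¹ * f * i) ≤ aLen n f := by
  have hn : 0 < n := by
    by_contra h
    have h0 : n = 0 := by omega
    have := hfB.2.1 0
    rw [h0] at this
    push_cast at this
    omega
  have hfa : IsAffinePerm n f := hf.1
  have hia : IsAffinePerm n i := hi.1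
  have hu : IsAffinePerm n (i⁻¹ * f) := affine_mul (affine_inv hia) hfa
  have hsub : aLen n ((i⁻¹ * f) * i) ≤ aLen n (i⁻¹ * f) + aLen n i :=
    aLen_mul_le hn hu hia
  have : i⁻¹ * f * i = (i⁻¹ * f) * i := by group
  rw [this]
  have hle' : aLen n f = aLen n i + aLen n (i⁻¹ * f) := hle
  omega
end

section
/- Let π and ι be permutations of {1,…,n} of type (k,n) with ι ≤_∘ π, with lifts f, i ∈ Bound(k,n); set r = f⁻¹·i and m = i⁻¹·f·i (so m = r⁻¹·i). Then ℓ(m) < ℓ(f) if and only if there exists an affine transposition t with ℓ(t·r) < ℓ(r) and ℓ(t·i) < ℓ(i). -/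
open Finset

theorem Equiv.Perm.apply_inv_self {α : Type*} (f : Equiv.Perm α) (x : α) : f (f⁻¹ x) = x :=
  f.apply_symm_apply x

theorem Equiv.Perm.inv_apply_self {α : Type*} (f : Equiv.Perm α) (x : α) : f⁻¹ (f x) = x :=
  f.symm_apply_apply x

section Helpers

variable {n : ℕ} {w u v t : Equiv.Perm ℤ}

/-- inversion predicate matching `aLen`'s set. -/
def invp (n : ℕ) (w : Equiv.Perm ℤ) (p : ℤ × ℤ) : Prop :=
  1 ≤ p.1 ∧ p.1 ≤ (n : ℤ) ∧ p.1 < p.2 ∧ w p.2 < w p.1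

lemma aLen_eq (n : ℕ) (w : Equiv.Perm ℤ) : aLen n w = {p : ℤ × ℤ | invp n w p}.ncard := rfl

lemma aff_add_mul (hw : IsAffinePerm n w) (a : ℤ) : ∀ j : ℤ, w (a + j * n) = w a + j * n := by
  intro j
  induction j using Int.induction_on with
  | zero => simp
  | succ k ih =>
      have h1 : a + (k + 1 : ℤ) * n = (a + k * n) + n := by ring
      rw [h1, hw, ih]; ring
  | pred k ih =>
      have h1 : a + (-k : ℤ) * n = (a + (-k - 1) * n) + n := by ring
      rw [h1] at ih
      rw [hw] at ih
      omega

lemma aff_inv (hw : IsAffinePerm n w) : IsAffinePerm n w⁻¹ := by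
  intro a
  apply w.injective
  rw [Equiv.Perm.apply_inv_self]
  have := hw (w⁻¹ a)
  rw [Equiv.Perm.apply_inv_self] at this
  exact this.symm

lemma aff_mul (hu : IsAffinePerm n u) (hv : IsAffinePerm n v) : IsAffinePerm n (u * v) := by
  intro a
  simp only [Equiv.Perm.mul_apply]
  rw [hv, hu]

/-- normalizing shift -/
def nsh (n : ℕ) (a : ℤ) : ℤ := (a - 1) / (n : ℤ)

lemma nsh_mem (hn : 0 < n) (a : ℤ) : 1 ≤ a - nsh n a * n ∧ a - nsh n a * n ≤ (n : ℤ) := by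
  have hn' : (0 : ℤ) < (n : ℤ) := by exact_mod_cast hn
  have h1 : 0 ≤ (a - 1) % (n : ℤ) := Int.emod_nonneg _ (by omega)
  have h2 : (a - 1) % (n : ℤ) < (n : ℤ) := Int.emod_lt_of_pos _ hn'
  have h3 : (n : ℤ) * ((a - 1) / (n : ℤ)) + (a - 1) % (n : ℤ) = a - 1 := Int.mul_ediv_add_emod _ _
  have h4 : (n : ℤ) * ((a - 1) / (n : ℤ)) = ((a - 1) / (n : ℤ)) * (n : ℤ) := mul_comm _ _
  unfold nsh
  omega

lemma nsh_of_mem (hn : 0 < n) {a : ℤ} (h1 : 1 ≤ a) (h2 : a ≤ (n : ℤ)) : nsh n a = 0 := by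
  have hn' : (0 : ℤ) < (n : ℤ) := by exact_mod_cast hn
  exact Int.ediv_eq_zero_of_lt (by omega) (by omega)

lemma nsh_shift (hn : 0 < n) (a j : ℤ) : nsh n (a + j * n) = nsh n a + j := by
  have hn' : ((n : ℤ)) ≠ 0 := by exact_mod_cast hn.ne'
  unfold nsh
  rw [show a + j * (n : ℤ) - 1 = (a - 1) + j * n by ring, Int.add_mul_ediv_right _ _ hn']

lemma shift_cancel (hn : 0 < n) {a a' K : ℤ} (h1 : 1 ≤ a) (h2 : a ≤ (n : ℤ))
    (h1' : 1 ≤ a') (h2' : a' ≤ (n : ℤ)) (h : a = a' + K * n) : a = a' ∧ K = 0 := by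
  have hn' : (0 : ℤ) < (n : ℤ) := by exact_mod_cast hn
  rcases lt_trichotomy K 0 with hK | hK | hK
  · have h5 : K * (n:ℤ) ≤ -(n:ℤ) := by nlinarith
    omega
  · rw [hK, zero_mul, add_zero] at h; exact ⟨h, hK⟩
  · have h5 : (n:ℤ) ≤ K * (n:ℤ) := by nlinarith
    omega

lemma invSet_finite_s5 (hn : 0 < n) (hw : IsAffinePerm n w) :
    {p : ℤ × ℤ | invp n w p}.Finite := by
  have hn' : (0 : ℤ) < (n : ℤ) := by exact_mod_cast hn
  -- bound on |w b - b|
  have hne : (Finset.Icc (1:ℤ) (n:ℤ)).Nonempty := by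
    rw [Finset.nonempty_Icc]; omega
  set S := (Finset.Icc (1:ℤ) (n:ℤ)).image (fun a => |w a - a|) with hS
  have hSne : S.Nonempty := hne.image _
  set K := S.max' hSne with hK
  have hbd : ∀ b : ℤ, |w b - b| ≤ K := by
    intro b
    have hmem := nsh_mem hn b
    have := aff_add_mul hw (b - nsh n b * n) (nsh n b)
    rw [show b - nsh n b * n + nsh n b * n = b by ring] at this
    have heq : w b - b = w (b - nsh n b * n) - (b - nsh n b * n) := by omega
    apply Finset.le_max'
    rw [hS, Finset.mem_image]
    exact ⟨b - nsh n b * n, Finset.mem_Icc.mpr ⟨hmem.1, hmem.2⟩, by rw [heq]⟩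
  apply Set.Finite.subset ((Finset.Icc (1:ℤ) (n:ℤ) ×ˢ Finset.Icc (1:ℤ) ((n:ℤ) + 2*K)).finite_toSet)
  rintro ⟨a, b⟩ ⟨h1, h2, h3, h4⟩
  dsimp only at h1 h2 h3 h4
  have hb1 := hbd a
  have hb2 := hbd b
  simp only [Finset.coe_product, Set.mem_prod, Finset.mem_coe, Finset.mem_Icc]
  constructor
  · exact ⟨h1, h2⟩
  · constructor
    · omega
    · rw [abs_le] at hb1 hb2; omega

lemma inv_ne {a b : ℤ} (hw : ¬ w b < w a) (hab : a < b) : w a < w b := by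
  rcases lt_trichotomy (w a) (w b) with h | h | h
  · exact h
  · exact absurd (w.injective h) (by omega)
  · exact absurd h hw

end Helpers

section LemA

variable {n : ℕ} {w u v : Equiv.Perm ℤ}

lemma invp_def {p : ℤ × ℤ} :
    invp n w p ↔ (1 ≤ p.1 ∧ p.1 ≤ (n : ℤ) ∧ p.1 < p.2 ∧ w p.2 < w p.1) := Iff.rfl

lemma aff_sub_mul (hw : IsAffinePerm n w) (a k : ℤ) : w (a - k * n) = w a - k * n := by
  have h := aff_add_mul hw a (-k)
  rw [show a + (-k) * (n:ℤ) = a - k * n by ring] at h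
  rw [h]; ring

lemma lemA (hn : 0 < n) (hu : IsAffinePerm n u) (hv : IsAffinePerm n v) :
    aLen n u + aLen n v =
      aLen n (u * v) + 2 * {p : ℤ × ℤ | invp n v p ∧ ¬ invp n (u * v) p}.ncard := by
  have huv : IsAffinePerm n (u * v) := aff_mul hu hv
  have hvi : IsAffinePerm n (v⁻¹ : Equiv.Perm ℤ) := aff_inv hv
  set A := {p : ℤ × ℤ | invp n v p ∧ invp n (u * v) p} with hA
  set B := {p : ℤ × ℤ | invp n v p ∧ ¬ invp n (u * v) p} with hB
  set C := {p : ℤ × ℤ | ¬ invp n v p ∧ invp n (u * v) p} with hC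
  have hfv := invSet_finite_s5 hn hv
  have hfuv := invSet_finite_s5 hn huv
  have hAf : A.Finite := hfv.subset (fun p hp => hp.1)
  have hBf : B.Finite := hfv.subset (fun p hp => hp.1)
  have hCf : C.Finite := hfuv.subset (fun p hp => hp.2)
  have hv2 : aLen n v = A.ncard + B.ncard := by
    rw [aLen_eq, show {p : ℤ × ℤ | invp n v p} = A ∪ B from by
      ext p; simp only [hA, hB, Set.mem_setOf_eq, Set.mem_union]; tauto]
    exact Set.ncard_union_eq (by
      rw [Set.disjoint_left]; rintro p hp hp2; exact hp2.2 hp.2) hAf hBf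
  have huv2 : aLen n (u * v) = A.ncard + C.ncard := by
    rw [aLen_eq, show {p : ℤ × ℤ | invp n (u * v) p} = A ∪ C from by
      ext p; simp only [hA, hC, Set.mem_setOf_eq, Set.mem_union]; tauto]
    exact Set.ncard_union_eq (by
      rw [Set.disjoint_left]; rintro p hp hp2; exact hp2.1 hp.1) hAf hCf
  set e₁ : ℤ × ℤ → ℤ × ℤ := fun p => (v p.2 - nsh n (v p.2) * n, v p.1 - nsh n (v p.2) * n)
    with he₁
  set e₂ : ℤ × ℤ → ℤ × ℤ := fun p => (v p.1 - nsh n (v p.1) * n, v p.2 - nsh n (v p.1) * n)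
    with he₂
  have hu2 : aLen n u = B.ncard + C.ncard := by
    have himg : {p : ℤ × ℤ | invp n u p} = e₁ '' B ∪ e₂ '' C := by
      ext q
      simp only [Set.mem_setOf_eq, Set.mem_union, Set.mem_image]
      constructor
      · intro hq
        obtain ⟨hq1, hq2, hq3, hq4⟩ := invp_def.mp hq
        rcases lt_trichotomy ((v⁻¹ : Equiv.Perm ℤ) q.1) ((v⁻¹ : Equiv.Perm ℤ) q.2)
          with hxy | hxy | hxy
        · right
          set x := (v⁻¹ : Equiv.Perm ℤ) q.1 with hx
          set y := (v⁻¹ : Equiv.Perm ℤ) q.2 with hy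
          have hm := nsh_mem hn x
          set k := nsh n x with hk
          have hva : v (x - k * n) = q.1 - k * n := by
            rw [aff_sub_mul hv, hx, Equiv.Perm.apply_inv_self]
          have hvb : v (y - k * n) = q.2 - k * n := by
            rw [aff_sub_mul hv, hy, Equiv.Perm.apply_inv_self]
          refine ⟨(x - k * n, y - k * n), ⟨?_, ?_⟩, ?_⟩
          · intro hcon
            obtain ⟨_, _, _, h4⟩ := invp_def.mp hcon
            dsimp only at h4
            rw [hva, hvb] at h4
            omega
          · rw [invp_def]
            try dsimp only
            refine ⟨by omega, by omega, by omega, ?_⟩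
            rw [Equiv.Perm.mul_apply, Equiv.Perm.mul_apply, hva, hvb,
              aff_sub_mul hu, aff_sub_mul hu]
            omega
          · simp only [he₂]
            try dsimp only
            rw [hva, show q.1 - k * n = q.1 + (-k) * n by ring, nsh_shift hn,
              nsh_of_mem hn hq1 hq2, hvb]
            exact Prod.ext_iff.mpr ⟨by dsimp only; ring, by dsimp only; ring⟩
        · exact absurd ((v⁻¹ : Equiv.Perm ℤ).injective hxy) (by omega)
        · left
          set x := (v⁻¹ : Equiv.Perm ℤ) q.2 with hx
          set y := (v⁻¹ : Equiv.Perm ℤ) q.1 with hy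
          have hm := nsh_mem hn x
          set k := nsh n x with hk
          have hva : v (x - k * n) = q.2 - k * n := by
            rw [aff_sub_mul hv, hx, Equiv.Perm.apply_inv_self]
          have hvb : v (y - k * n) = q.1 - k * n := by
            rw [aff_sub_mul hv, hy, Equiv.Perm.apply_inv_self]
          refine ⟨(x - k * n, y - k * n), ⟨?_, ?_⟩, ?_⟩
          · rw [invp_def]
            try dsimp only
            refine ⟨by omega, by omega, by omega, ?_⟩
            rw [hva, hvb]
            omega
          · intro hcon
            obtain ⟨_, _, _, h4⟩ := invp_def.mp hcon
            dsimp only at h4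
            rw [Equiv.Perm.mul_apply, Equiv.Perm.mul_apply, hva, hvb,
              aff_sub_mul hu, aff_sub_mul hu] at h4
            omega
          · simp only [he₁]
            try dsimp only
            rw [hvb, show q.1 - k * n = q.1 + (-k) * n by ring, nsh_shift hn,
              nsh_of_mem hn hq1 hq2, hva]
            exact Prod.ext_iff.mpr ⟨by dsimp only; ring, by dsimp only; ring⟩
      · rintro (⟨p, hp, rfl⟩ | ⟨p, hp, rfl⟩)
        · obtain ⟨hb1, hb2, hb3, hb4⟩ := invp_def.mp hp.1
          have h5 : ¬ ((u * v) p.2 < (u * v) p.1) := fun hl =>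
            hp.2 (invp_def.mpr ⟨hb1, hb2, hb3, hl⟩)
          have h6 : (u * v) p.1 < (u * v) p.2 := inv_ne h5 hb3
          rw [Equiv.Perm.mul_apply, Equiv.Perm.mul_apply] at h6
          have hm := nsh_mem hn (v p.2)
          rw [invp_def]
          simp only [he₁]
          try dsimp only
          refine ⟨by omega, by omega, by omega, ?_⟩
          rw [aff_sub_mul hu, aff_sub_mul hu]
          omega
        · obtain ⟨hb1, hb2, hb3, hb4⟩ := invp_def.mp hp.2
          have h5 : ¬ (v p.2 < v p.1) := fun hl =>
            hp.1 (invp_def.mpr ⟨hb1, hb2, hb3, hl⟩)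
          have h6 : v p.1 < v p.2 := inv_ne h5 hb3
          rw [Equiv.Perm.mul_apply, Equiv.Perm.mul_apply] at hb4
          have hm := nsh_mem hn (v p.1)
          rw [invp_def]
          simp only [he₂]
          try dsimp only
          refine ⟨by omega, by omega, by omega, ?_⟩
          rw [aff_sub_mul hu, aff_sub_mul hu]
          omega
    have hinj1 : Set.InjOn e₁ B := by
      intro p hp p' hp' heq
      obtain ⟨hb1, hb2, hb3, hb4⟩ := invp_def.mp hp.1
      obtain ⟨hc1, hc2, hc3, hc4⟩ := invp_def.mp hp'.1
      simp only [he₁, Prod.ext_iff] at heq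
      try dsimp only at heq
      obtain ⟨h1, h2⟩ := heq
      set k := nsh n (v p.2) with hk
      set k' := nsh n (v p'.2) with hk'
      have hval : v p.1 = v (p'.1 + (k - k') * n) := by
        rw [aff_add_mul hv]
        have hrng : (k - k') * (n:ℤ) = k * n - k' * n := by ring
        omega
      have hpos : p.1 = p'.1 + (k - k') * n := v.injective hval
      obtain ⟨hpp, hKK⟩ := shift_cancel hn hb1 hb2 hc1 hc2 hpos
      have hkk' : k = k' := by omega
      simp only [hkk'] at h1 h2
      have hval2 : v p.2 = v p'.2 := by omega
      have hpos2 : p.2 = p'.2 := v.injective hval2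
      exact Prod.ext_iff.mpr ⟨hpp, hpos2⟩
    have hinj2 : Set.InjOn e₂ C := by
      intro p hp p' hp' heq
      obtain ⟨hb1, hb2, hb3, hb4⟩ := invp_def.mp hp.2
      obtain ⟨hc1, hc2, hc3, hc4⟩ := invp_def.mp hp'.2
      simp only [he₂, Prod.ext_iff] at heq
      try dsimp only at heq
      obtain ⟨h1, h2⟩ := heq
      set k := nsh n (v p.1) with hk
      set k' := nsh n (v p'.1) with hk'
      have hval : v p.1 = v (p'.1 + (k - k') * n) := by
        rw [aff_add_mul hv]
        have hrng : (k - k') * (n:ℤ) = k * n - k' * n := by ring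
        omega
      have hpos : p.1 = p'.1 + (k - k') * n := v.injective hval
      obtain ⟨hpp, hKK⟩ := shift_cancel hn hb1 hb2 hc1 hc2 hpos
      have hkk' : k = k' := by omega
      simp only [hkk'] at h1 h2
      have hval2 : v p.2 = v p'.2 := by omega
      have hpos2 : p.2 = p'.2 := v.injective hval2
      exact Prod.ext_iff.mpr ⟨hpp, hpos2⟩
    have hdisj : Disjoint (e₁ '' B) (e₂ '' C) := by
      rw [Set.disjoint_left]
      rintro q ⟨p, hp, rfl⟩ ⟨p', hp', heq⟩
      obtain ⟨hb1, hb2, hb3, hb4⟩ := invp_def.mp hp.1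
      obtain ⟨hc1, hc2, hc3, hc4⟩ := invp_def.mp hp'.2
      simp only [he₁, he₂, Prod.ext_iff] at heq
      try dsimp only at heq
      obtain ⟨h1, h2⟩ := heq
      set k := nsh n (v p.2) with hk
      set k' := nsh n (v p'.1) with hk'
      have ha : v (p'.1 - k' * n) = v (p.2 - k * n) := by
        rw [aff_sub_mul hv, aff_sub_mul hv]; omega
      have hb : v (p'.2 - k' * n) = v (p.1 - k * n) := by
        rw [aff_sub_mul hv, aff_sub_mul hv]; omega
      have ha' := v.injective ha
      have hb' := v.injective hb
      omega
    rw [aLen_eq, himg, Set.ncard_union_eq hdisj (hBf.image _) (hCf.image _),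
      Set.ncard_image_of_injOn hinj1, Set.ncard_image_of_injOn hinj2]
  omega

end LemA

section Transp

variable {n : ℕ} {w t : Equiv.Perm ℤ} {c d : ℤ}

lemma transp_symm (ht : IsAffTranspAt n c d t) : IsAffTranspAt n d c t := by
  refine ⟨fun h => ht.1 ?_, fun x => ⟨(ht.2 x).2.1, (ht.2 x).1, fun h1 h2 => (ht.2 x).2.2 h2 h1⟩⟩
  have := (dvd_neg (α := ℤ)).mpr h
  rwa [show -(c - d) = d - c by ring] at this

lemma transp_invol (ht : IsAffTranspAt n c d t) (x : ℤ) : t (t x) = x := by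
  by_cases h1 : (n:ℤ) ∣ x - c
  · rw [(ht.2 x).1 h1]
    have h2 : (n:ℤ) ∣ (x - c + d) - d := by rwa [show x - c + d - d = x - c by ring]
    rw [(ht.2 _).2.1 h2]; ring
  · by_cases h2 : (n:ℤ) ∣ x - d
    · rw [(ht.2 x).2.1 h2]
      have h3 : (n:ℤ) ∣ (x - d + c) - c := by rwa [show x - d + c - c = x - d by ring]
      rw [(ht.2 _).1 h3]; ring
    · rw [(ht.2 x).2.2 h1 h2, (ht.2 x).2.2 h1 h2]

lemma transp_mul_self (ht : IsAffTranspAt n c d t) : t * t = 1 := by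
  ext x
  simp [Equiv.Perm.mul_apply, transp_invol ht x]

lemma transp_inv (ht : IsAffTranspAt n c d t) : t⁻¹ = t :=
  inv_eq_of_mul_eq_one_right (transp_mul_self ht)

lemma transp_aff (ht : IsAffTranspAt n c d t) : IsAffinePerm n t := by
  intro a
  by_cases h1 : (n:ℤ) ∣ a - c
  · have h1' : (n:ℤ) ∣ (a + n) - c := by
      have := dvd_add h1 (dvd_refl (n:ℤ))
      rwa [show a - c + n = a + n - c by ring] at this
    rw [(ht.2 _).1 h1', (ht.2 a).1 h1]; ring
  · by_cases h2 : (n:ℤ) ∣ a - d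
    · have h2' : (n:ℤ) ∣ (a + n) - d := by
        have := dvd_add h2 (dvd_refl (n:ℤ))
        rwa [show a - d + n = a + n - d by ring] at this
      rw [(ht.2 _).2.1 h2', (ht.2 a).2.1 h2]; ring
    · have h1' : ¬ (n:ℤ) ∣ (a + n) - c := fun h => h1 (by
        have := dvd_sub h (dvd_refl (n:ℤ))
        rwa [show a + n - c - n = a - c by ring] at this)
      have h2' : ¬ (n:ℤ) ∣ (a + n) - d := fun h => h2 (by
        have := dvd_sub h (dvd_refl (n:ℤ))
        rwa [show a + n - d - n = a - d by ring] at this)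
      rw [(ht.2 _).2.2 h1' h2', (ht.2 a).2.2 h1 h2]

lemma transp_apply_left (ht : IsAffTranspAt n c d t) : t c = d := by
  have h := (ht.2 c).1 ⟨0, by ring⟩
  omega

lemma transp_apply_right (ht : IsAffTranspAt n c d t) : t d = c := by
  have h := (ht.2 d).2.1 ⟨0, by ring⟩
  omega

lemma step_order (hw : IsAffinePerm n w) (hcd : c < d)
    (ht : IsAffTranspAt n c d t) (hpq : w⁻¹ d < w⁻¹ c) {a b : ℤ}
    (hwab : w a < w b) (htw : t (w b) < t (w a)) :
    w⁻¹ (t (w a)) ≤ a ∧ b ≤ w⁻¹ (t (w b)) := by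
  have hwi : IsAffinePerm n (w⁻¹ : Equiv.Perm ℤ) := aff_inv hw
  set x := w a with hx
  set y := w b with hy
  have hia : (w⁻¹ : Equiv.Perm ℤ) x = a := by rw [hx, Equiv.Perm.inv_apply_self]
  have hib : (w⁻¹ : Equiv.Perm ℤ) y = b := by rw [hy, Equiv.Perm.inv_apply_self]
  by_cases hxc : (n:ℤ) ∣ x - c
  · have htx : t x = x - c + d := (ht.2 x).1 hxc
    obtain ⟨α, hα⟩ := hxc
    rw [mul_comm] at hα
    have hsa : (w⁻¹ : Equiv.Perm ℤ) (t x) = w⁻¹ d + α * n := by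
      rw [htx, show x - c + d = d + α * n by omega, aff_add_mul hwi]
    have ha : a = w⁻¹ c + α * n := by
      rw [← hia, show x = c + α * n by omega, aff_add_mul hwi]
    by_cases hyd : (n:ℤ) ∣ y - d
    · have hty : t y = y - d + c := (ht.2 y).2.1 hyd
      obtain ⟨β, hβ⟩ := hyd
      rw [mul_comm] at hβ
      have hsb : (w⁻¹ : Equiv.Perm ℤ) (t y) = w⁻¹ c + β * n := by
        rw [hty, show y - d + c = c + β * n by omega, aff_add_mul hwi]
      have hb : b = w⁻¹ d + β * n := by
        rw [← hib, show y = d + β * n by omega, aff_add_mul hwi]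
      omega
    · by_cases hyc : (n:ℤ) ∣ y - c
      · have hty : t y = y - c + d := (ht.2 y).1 hyc
        rw [htx, hty] at htw
        omega
      · have hty : t y = y := (ht.2 y).2.2 hyc hyd
        rw [hty, hib]
        omega
  · by_cases hxd : (n:ℤ) ∣ x - d
    · have htx : t x = x - d + c := (ht.2 x).2.1 hxd
      by_cases hyc : (n:ℤ) ∣ y - c
      · rw [htx, (ht.2 y).1 hyc] at htw
        omega
      · by_cases hyd : (n:ℤ) ∣ y - d
        · rw [htx, (ht.2 y).2.1 hyd] at htw
          omega
        · rw [htx, (ht.2 y).2.2 hyc hyd] at htw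
          omega
    · have htx : t x = x := (ht.2 x).2.2 hxc hxd
      by_cases hyd : (n:ℤ) ∣ y - d
      · have hty : t y = y - d + c := (ht.2 y).2.1 hyd
        obtain ⟨β, hβ⟩ := hyd
        rw [mul_comm] at hβ
        have hsb : (w⁻¹ : Equiv.Perm ℤ) (t y) = w⁻¹ c + β * n := by
          rw [hty, show y - d + c = c + β * n by omega, aff_add_mul hwi]
        have hb : b = w⁻¹ d + β * n := by
          rw [← hib, show y = d + β * n by omega, aff_add_mul hwi]
        rw [htx, hia]
        omega
      · by_cases hyc : (n:ℤ) ∣ y - c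
        · rw [htx, (ht.2 y).1 hyc] at htw
          omega
        · rw [htx, (ht.2 y).2.2 hyc hyd] at htw
          omega

lemma key_inj (hn : 0 < n) (hw : IsAffinePerm n w) (hcd : c < d)
    (ht : IsAffTranspAt n c d t) (hpq : w⁻¹ d < w⁻¹ c) :
    {p : ℤ × ℤ | invp n (t * w) p ∧ ¬ invp n w p}.ncard
      < {p : ℤ × ℤ | invp n w p ∧ ¬ invp n (t * w) p}.ncard := by
  have hwi : IsAffinePerm n (w⁻¹ : Equiv.Perm ℤ) := aff_inv hw
  have hta := transp_aff ht
  have htwa : IsAffinePerm n (t * w) := aff_mul hta hw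
  set B1 := {p : ℤ × ℤ | invp n w p ∧ ¬ invp n (t * w) p} with hB1
  set B2 := {p : ℤ × ℤ | invp n (t * w) p ∧ ¬ invp n w p} with hB2
  have hf1 : B1.Finite := (invSet_finite_s5 hn hw).subset (fun p hp => hp.1)
  have hf2 : B2.Finite := (invSet_finite_s5 hn htwa).subset (fun p hp => hp.1)
  set s : ℤ → ℤ := fun z => (w⁻¹ : Equiv.Perm ℤ) (t (w z)) with hs
  have hs_shift : ∀ z j : ℤ, s (z + j * n) = s z + j * n := by
    intro z j
    simp only [hs]
    rw [aff_add_mul hw, aff_add_mul hta, aff_add_mul hwi]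
  have hs_invol : ∀ z : ℤ, s (s z) = z := by
    intro z
    simp only [hs]
    rw [Equiv.Perm.apply_inv_self, transp_invol ht, Equiv.Perm.inv_apply_self]
  set Ψ : ℤ × ℤ → ℤ × ℤ := fun p => (s p.1 - nsh n (s p.1) * n, s p.2 - nsh n (s p.1) * n)
    with hΨ
  have hmaps : ∀ p ∈ B2, Ψ p ∈ B1 := by
    intro p hp
    obtain ⟨h1, h2, h3, h4⟩ := invp_def.mp hp.1
    rw [Equiv.Perm.mul_apply, Equiv.Perm.mul_apply] at h4
    have h5 : ¬ (w p.2 < w p.1) := fun hl => hp.2 (invp_def.mpr ⟨h1, h2, h3, hl⟩)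
    have h6 : w p.1 < w p.2 := inv_ne h5 h3
    have hord := step_order hw hcd ht hpq h6 h4
    have hm := nsh_mem hn (s p.1)
    have hsa : s p.1 = (w⁻¹ : Equiv.Perm ℤ) (t (w p.1)) := rfl
    have hsb : s p.2 = (w⁻¹ : Equiv.Perm ℤ) (t (w p.2)) := rfl
    have hw1 : w (s p.1 - nsh n (s p.1) * n) = t (w p.1) - nsh n (s p.1) * n := by
      rw [aff_sub_mul hw]
      simp only [hs]
      rw [Equiv.Perm.apply_inv_self]
    have hw2 : w (s p.2 - nsh n (s p.1) * n) = t (w p.2) - nsh n (s p.1) * n := by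
      rw [aff_sub_mul hw]
      simp only [hs]
      rw [Equiv.Perm.apply_inv_self]
    constructor
    · rw [invp_def]
      simp only [hΨ]
      try dsimp only
      refine ⟨by omega, by omega, by omega, ?_⟩
      rw [hw1, hw2]
      omega
    · intro hcon
      obtain ⟨_, _, _, hc4⟩ := invp_def.mp hcon
      simp only [hΨ] at hc4
      try dsimp only at hc4
      rw [Equiv.Perm.mul_apply, Equiv.Perm.mul_apply, hw1, hw2,
        aff_sub_mul hta, aff_sub_mul hta, transp_invol ht, transp_invol ht] at hc4
      omega
  have hinj : Set.InjOn Ψ B2 := by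
    intro p hp p' hp' heq
    obtain ⟨hb1, hb2, hb3, hb4⟩ := invp_def.mp hp.1
    obtain ⟨hc1, hc2, hc3, hc4⟩ := invp_def.mp hp'.1
    simp only [hΨ, Prod.ext_iff] at heq
    try dsimp only at heq
    obtain ⟨h1, h2⟩ := heq
    set k := nsh n (s p.1) with hk
    set k' := nsh n (s p'.1) with hk'
    have hval : s p.1 = s p'.1 + (k - k') * n := by
      have hrng : (k - k') * (n:ℤ) = k * n - k' * n := by ring
      omega
    have hpos : p.1 = p'.1 + (k - k') * n := by
      have := congrArg s hval
      rwa [hs_invol, hs_shift, hs_invol] at this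
    obtain ⟨hpp, hKK⟩ := shift_cancel hn hb1 hb2 hc1 hc2 hpos
    have hkk' : k = k' := by omega
    simp only [hkk'] at h1 h2
    have hval2 : s p.2 = s p'.2 := by omega
    have hpos2 : p.2 = p'.2 := by
      have := congrArg s hval2
      rwa [hs_invol, hs_invol] at this
    exact Prod.ext_iff.mpr ⟨hpp, hpos2⟩
  set q0 := (w⁻¹ : Equiv.Perm ℤ) d with hq0
  set p0 := (w⁻¹ : Equiv.Perm ℤ) c with hp0
  have hm0 := nsh_mem hn q0
  set k0 := nsh n q0 with hk0
  set pt : ℤ × ℤ := (q0 - k0 * n, p0 - k0 * n) with hpt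
  have htc : t c = d := transp_apply_left ht
  have htd : t d = c := transp_apply_right ht
  have hsq0 : s q0 = p0 := by
    simp only [hs, hq0, hp0]
    rw [Equiv.Perm.apply_inv_self, htd]
  have hsp0 : s p0 = q0 := by
    simp only [hs, hq0, hp0]
    rw [Equiv.Perm.apply_inv_self, htc]
  have hwq0 : w (q0 - k0 * n) = d - k0 * n := by
    rw [aff_sub_mul hw, hq0, Equiv.Perm.apply_inv_self]
  have hwp0 : w (p0 - k0 * n) = c - k0 * n := by
    rw [aff_sub_mul hw, hp0, Equiv.Perm.apply_inv_self]
  have hptB1 : pt ∈ B1 := by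
    constructor
    · rw [invp_def]
      simp only [hpt]
      try dsimp only
      refine ⟨by omega, by omega, by omega, ?_⟩
      rw [hwq0, hwp0]
      omega
    · intro hcon
      obtain ⟨_, _, _, hc4⟩ := invp_def.mp hcon
      simp only [hpt] at hc4
      try dsimp only at hc4
      rw [Equiv.Perm.mul_apply, Equiv.Perm.mul_apply, hwq0, hwp0,
        aff_sub_mul hta, aff_sub_mul hta, htc, htd] at hc4
      omega
  have hptnot : pt ∉ Ψ '' B2 := by
    rintro ⟨p, hp, heq⟩
    obtain ⟨hb1, hb2, hb3, hb4⟩ := invp_def.mp hp.1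
    simp only [hΨ, hpt, Prod.ext_iff] at heq
    try dsimp only at heq
    obtain ⟨h1, h2⟩ := heq
    set k := nsh n (s p.1) with hk
    have hval : s p.1 = q0 + (k - k0) * n := by
      have hrng : (k - k0) * (n:ℤ) = k * n - k0 * n := by ring
      omega
    have hpos : p.1 = p0 + (k - k0) * n := by
      have := congrArg s hval
      rwa [hs_invol, hs_shift, hsq0] at this
    have hval2 : s p.2 = p0 + (k - k0) * n := by
      have hrng : (k - k0) * (n:ℤ) = k * n - k0 * n := by ring
      omega
    have hpos2 : p.2 = q0 + (k - k0) * n := by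
      have := congrArg s hval2
      rwa [hs_invol, hs_shift, hsp0] at this
    omega
  have hsub : Ψ '' B2 ⊆ B1 := by
    rintro q ⟨p, hp, rfl⟩
    exact hmaps p hp
  have hss : Ψ '' B2 ⊂ B1 := (Set.ssubset_iff_of_subset hsub).mpr ⟨pt, hptB1, hptnot⟩
  calc B2.ncard = (Ψ '' B2).ncard := (Set.ncard_image_of_injOn hinj).symm
    _ < B1.ncard := Set.ncard_lt_ncard hss hf1

lemma lemB' (hn : 0 < n) (hw : IsAffinePerm n w) (hcd : c < d)
    (ht : IsAffTranspAt n c d t) (hpq : w⁻¹ d < w⁻¹ c) :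
    aLen n (t * w) < aLen n w := by
  have hta := transp_aff ht
  have htwa : IsAffinePerm n (t * w) := aff_mul hta hw
  have h1 := lemA hn hta hw
  have h2 := lemA hn hta htwa
  have httw : t * (t * w) = w := by rw [← mul_assoc, transp_mul_self ht, one_mul]
  rw [httw] at h2
  have hkey := key_inj hn hw hcd ht hpq
  omega

lemma lemB_iff (hn : 0 < n) (hw : IsAffinePerm n w) (hcd : c < d)
    (ht : IsAffTranspAt n c d t) :
    aLen n (t * w) < aLen n w ↔ w⁻¹ d < w⁻¹ c := by
  constructor
  · intro h
    by_contra h'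
    push_neg at h'
    have hne : (w⁻¹ : Equiv.Perm ℤ) d ≠ w⁻¹ c := fun he =>
      (by omega : c ≠ d) (w⁻¹.injective he).symm
    have hlt : (w⁻¹ : Equiv.Perm ℤ) c < w⁻¹ d := lt_of_le_of_ne h' (Ne.symm hne)
    have htw : IsAffinePerm n (t * w) := aff_mul (transp_aff ht) hw
    have h2 : (t * w)⁻¹ d < (t * w)⁻¹ c := by
      rw [mul_inv_rev, transp_inv ht]
      simp only [Equiv.Perm.mul_apply]
      rw [transp_apply_right ht, transp_apply_left ht]
      exact hlt
    have := lemB' hn htw hcd ht h2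
    rw [← mul_assoc, transp_mul_self ht, one_mul] at this
    omega
  · exact lemB' hn hw hcd ht

end Transp

section MainAux

variable {n : ℕ}

lemma aLen_zero (w : Equiv.Perm ℤ) : aLen 0 w = 0 := by
  rw [aLen_eq]
  convert Set.ncard_empty (ℤ × ℤ)
  ext p
  simp only [Set.mem_setOf_eq, Set.mem_empty_iff_false, iff_false]
  rintro ⟨h1, h2, _, _⟩
  have : ((0:ℕ):ℤ) = 0 := rfl
  omega

lemma exists_transp {c d : ℤ} (hd : ¬ (n:ℤ) ∣ d - c) :
    ∃ t : Equiv.Perm ℤ, IsAffTranspAt n c d t := by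
  have hexcl : ∀ x : ℤ, (n:ℤ) ∣ x - c → (n:ℤ) ∣ x - d → False := fun x h1 h2 =>
    hd (by
      have := dvd_sub h1 h2
      rwa [show x - c - (x - d) = d - c by ring] at this)
  set T : ℤ → ℤ := fun x =>
    if (n:ℤ) ∣ x - c then x - c + d else if (n:ℤ) ∣ x - d then x - d + c else x with hT
  have hval1 : ∀ x : ℤ, (n:ℤ) ∣ x - c → T x = x - c + d := by
    intro x h; simp only [hT]; rw [if_pos h]
  have hval2 : ∀ x : ℤ, (n:ℤ) ∣ x - d → T x = x - d + c := by
    intro x h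
    simp only [hT]
    rw [if_neg (fun h' => hexcl x h' h), if_pos h]
  have hval3 : ∀ x : ℤ, ¬ (n:ℤ) ∣ x - c → ¬ (n:ℤ) ∣ x - d → T x = x := by
    intro x h1 h2; simp only [hT]; rw [if_neg h1, if_neg h2]
  have hinv : Function.Involutive T := by
    intro x
    by_cases h1 : (n:ℤ) ∣ x - c
    · rw [hval1 x h1, hval2 (x - c + d) (by rwa [show x - c + d - d = x - c by ring])]
      ring
    · by_cases h2 : (n:ℤ) ∣ x - d
      · rw [hval2 x h2, hval1 (x - d + c) (by rwa [show x - d + c - c = x - d by ring])]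
        ring
      · rw [hval3 x h1 h2, hval3 x h1 h2]
  refine ⟨Function.Involutive.toPerm T hinv, hd, fun x => ?_⟩
  have hco : ∀ y : ℤ, (Function.Involutive.toPerm T hinv) y = T y := fun y =>
    congrFun (Function.Involutive.coe_toPerm hinv) y
  exact ⟨fun h => by rw [hco, hval1 x h], fun h => by rw [hco, hval2 x h],
    fun h1 h2 => by rw [hco, hval3 x h1 h2]⟩

end MainAux

/-- With `r = f⁻¹·i` and `m = i⁻¹·f·i`, one has `ℓ(m) < ℓ(f)` iff there is an
affine transposition `t` with `ℓ(t·r) < ℓ(r)` and `ℓ(t·i) < ℓ(i)`. -/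
theorem conjugate_length_lt_iff_common_left_reflection
    (n k : ℕ) (π ι : Equiv.Perm (Fin n)) (f i : Equiv.Perm ℤ)
    (hπ : IsType k n π) (hι : IsType k n ι)
    (hf : IsLift n π f) (hfB : f ∈ Bound k n)
    (hi : IsLift n ι i) (hiB : i ∈ Bound k n)
    (hle : LeR n i f) :
    aLen n (i⁻¹ * f * i) < aLen n f ↔
      ∃ t : Equiv.Perm ℤ, IsAffTransp n t ∧
        aLen n (t * (f⁻¹ * i)) < aLen n (f⁻¹ * i) ∧
        aLen n (t * i) < aLen n i := by
  rcases Nat.eq_zero_or_pos n with hn0 | hn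
  · subst hn0
    simp only [aLen_zero]
    constructor
    · intro h; exact absurd h (lt_irrefl 0)
    · rintro ⟨t, _, h1, _⟩; exact absurd h1 (lt_irrefl 0)
  · have hfa : IsAffinePerm n f := hfB.1
    have hia : IsAffinePerm n i := hiB.1
    have hifa : IsAffinePerm n (i⁻¹ * f) := aff_mul (aff_inv hia) hfa
    have hfia : IsAffinePerm n (f⁻¹ * i) := aff_mul (aff_inv hfa) hia
    have hkey := lemA hn hifa hia
    set Bs := {p : ℤ × ℤ | invp n i p ∧ ¬ invp n ((i⁻¹ * f) * i) p} with hBs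
    have hBf : Bs.Finite := (invSet_finite_s5 hn hia).subset (fun p hp => hp.1)
    have hle' : aLen n f = aLen n i + aLen n (i⁻¹ * f) := hle
    have hinvfi : (f⁻¹ * i)⁻¹ = i⁻¹ * f := by rw [mul_inv_rev, inv_inv]
    constructor
    · intro hlt
      have hNB : 0 < Bs.ncard := by omega
      obtain ⟨p, hp⟩ := (Set.ncard_pos hBf).mp hNB
      obtain ⟨hp1, hp2, hp3, hp4⟩ := invp_def.mp hp.1
      have hm5 : ¬ ((i⁻¹ * f * i) p.2 < (i⁻¹ * f * i) p.1) := fun hl =>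
        hp.2 (invp_def.mpr ⟨hp1, hp2, hp3, hl⟩)
      have hm6 : (i⁻¹ * f * i) p.1 < (i⁻¹ * f * i) p.2 := inv_ne hm5 hp3
      have hndvd : ¬ (n:ℤ) ∣ i p.1 - i p.2 := by
        rintro ⟨K, hK⟩
        rw [mul_comm] at hK
        have heq := i.injective (show i (p.2 + K * n) = i p.1 by
          rw [aff_add_mul hia]; omega)
        omega
      obtain ⟨t, ht⟩ := exists_transp hndvd
      refine ⟨t, ⟨i p.2, i p.1, ht⟩, ?_, ?_⟩
      · apply lemB' hn hfia hp4 ht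
        rw [hinvfi]
        exact hm6
      · apply lemB' hn hia hp4 ht
        simp only [Equiv.Perm.inv_apply_self]
        exact hp3
    · rintro ⟨t, ⟨a0, b0, ht0⟩, h1, h2⟩
      have hne : a0 ≠ b0 := fun h => ht0.1 (by rw [h]; simp)
      obtain ⟨c, d, hcd, ht⟩ : ∃ c d, c < d ∧ IsAffTranspAt n c d t := by
        rcases lt_or_gt_of_ne hne with h | h
        · exact ⟨a0, b0, h, ht0⟩
        · exact ⟨b0, a0, h, transp_symm ht0⟩
      have hi := (lemB_iff hn hia hcd ht).mp h2
      have hr := (lemB_iff hn hfia hcd ht).mp h1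
      rw [hinvfi] at hr
      have hia' : IsAffinePerm n (i⁻¹ : Equiv.Perm ℤ) := aff_inv hia
      have hm := nsh_mem hn ((i⁻¹ : Equiv.Perm ℤ) d)
      set k := nsh n ((i⁻¹ : Equiv.Perm ℤ) d) with hk
      have hva : i ((i⁻¹ : Equiv.Perm ℤ) d - k * n) = d - k * n := by
        rw [aff_sub_mul hia, Equiv.Perm.apply_inv_self]
      have hvb : i ((i⁻¹ : Equiv.Perm ℤ) c - k * n) = c - k * n := by
        rw [aff_sub_mul hia, Equiv.Perm.apply_inv_self]
      have hpmem : ((i⁻¹ : Equiv.Perm ℤ) d - k * n, (i⁻¹ : Equiv.Perm ℤ) c - k * n) ∈ Bs := by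
        constructor
        · rw [invp_def]
          try dsimp only
          refine ⟨by omega, by omega, by omega, ?_⟩
          rw [hva, hvb]
          omega
        · intro hcon
          obtain ⟨_, _, _, hc4⟩ := invp_def.mp hcon
          try dsimp only at hc4
          have hma : ((i⁻¹ * f) * i) ((i⁻¹ : Equiv.Perm ℤ) d - k * n)
              = (i⁻¹ * f) d - k * n := by
            rw [Equiv.Perm.mul_apply, hva, aff_sub_mul hifa]
          have hmb : ((i⁻¹ * f) * i) ((i⁻¹ : Equiv.Perm ℤ) c - k * n)
              = (i⁻¹ * f) c - k * n := by
            rw [Equiv.Perm.mul_apply, hvb, aff_sub_mul hifa]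
          rw [hma, hmb] at hc4
          omega
      have hNB : 0 < Bs.ncard := (Set.ncard_pos hBf).mpr ⟨_, hpmem⟩
      omega
end
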